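/- Let X be a set, let k ≥ 1, and let f_1, …, f_k : X → X be maps. For a word w = (w_1, …, w_n) ∈ {1,…,k}ⁿ write f_w = f_{w_1} ∘ ⋯ ∘ f_{w_n} (the identity for n = 0), and for a function h : X → ℝ and P ∈ X write S_n(h, P) = Σ_{w ∈ {1,…,k}ⁿ} max(1, h(f_w(P))). Suppose h, h' : X → ℝ are functions for which there exist real numbers m, m' ≥ 1 and C, C' ≥ 0 with h'(Q) ≤ m·h(Q) + C and h(Q) ≤ m'·h'(Q) + C' for all Q ∈ X. Then for every P ∈ X, limsup_{n→∞} S_n(h', P)^{1/n} = limsup_{n→∞} S_n(h, P)^{1/n} and liminf_{n→∞} S_n(h', P)^{1/n} = liminf_{n→∞} S_n(h, P)^{1/n}. Consequently the upper and lower arithmetic degrees (1/k)·limsup_{n→∞} S_n(h, P)^{1/n} and (1/k)·liminf_{n→∞} S_n(h, P)^{1/n} do not depend on the choice of the height function h within a commensurability class. -/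

import Mathlib

open Filter Topology

/-- `compWord f w P` is the composite `f_{w_1} ∘ ⋯ ∘ f_{w_n}` applied to `P`,
for the word `w = (w_1, …, w_n)` over the alphabet `Fin k`. -/
def compWord {X : Type*} {k : ℕ} (f : Fin k → X → X) : List (Fin k) → X → X
  | [], P => P
  | i :: w, P => f i (compWord f w P)

/-- `heightSum f g n P = Σ_{w ∈ {1,…,k}ⁿ} g (f_w P)`, the sum over all `kⁿ` words of length `n`. -/
noncomputable def heightSum {X : Type*} {k : ℕ} (f : Fin k → X → X) (g : X → ℝ)
    (n : ℕ) (P : X) : ℝ :=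
  ∑ w : Fin n → Fin k, g (compWord f (List.ofFn w) P)

private lemma tendsto_rpow_inv_nat {c : ℝ} (hc : 1 ≤ c) :
    Tendsto (fun n : ℕ => c ^ ((n : ℝ)⁻¹)) atTop (𝓝 1) := by
  have hcpos : (0:ℝ) < c := lt_of_lt_of_le one_pos hc
  have h0 : Tendsto (fun n : ℕ => ((n : ℝ))⁻¹) atTop (𝓝 0) :=
    tendsto_inv_atTop_zero.comp tendsto_natCast_atTop_atTop
  have h1 : Tendsto (fun n : ℕ => Real.log c * ((n:ℝ)⁻¹)) atTop (𝓝 0) := by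
    simpa using h0.const_mul (Real.log c)
  have hexp : Tendsto (fun n : ℕ => Real.exp (Real.log c * ((n:ℝ)⁻¹))) atTop (𝓝 1) := by
    simpa [Function.comp_def] using (Real.continuous_exp.tendsto 0).comp h1
  refine hexp.congr fun n => ?_
  rw [Real.rpow_def_of_pos hcpos]

private lemma limsup_of_not_bddUnder {u : ℕ → ℝ}
    (h : ¬ IsBoundedUnder (· ≤ ·) atTop u) : limsup u atTop = 0 := by
  rw [Filter.limsup_eq]
  convert Real.sInf_empty
  case e'_2 => rfl
  rw [Set.eq_empty_iff_forall_notMem]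
  intro x hx
  exact h ⟨x, hx⟩

private lemma liminf_of_tendsto_atTop {u : ℕ → ℝ}
    (h : Tendsto u atTop atTop) : liminf u atTop = 0 := by
  rw [Filter.liminf_eq]
  have : { a : ℝ | ∀ᶠ n in atTop, a ≤ u n } = Set.univ := by
    rw [Set.eq_univ_iff_forall]
    exact fun a => h.eventually_ge_atTop a
  rw [this]
  exact Real.sSup_univ

private lemma cobounded_of_not_tendsto {u : ℕ → ℝ}
    (h : ¬ Tendsto u atTop atTop) : IsCoboundedUnder (· ≥ ·) atTop u := by
  rw [tendsto_atTop] at h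
  push_neg at h
  obtain ⟨M, hM⟩ := h
  refine ⟨M, fun a ha => ?_⟩
  have ha' : ∀ᶠ n in atTop, a ≤ u n := by simpa [eventually_map] using ha
  obtain ⟨n, hn1, hn2⟩ := (hM.and_eventually ha').exists
  exact le_trans hn2 hn1.le

/-- Key comparison lemma for limsup. -/
private lemma limsup_le_aux (a b : ℕ → ℝ) (c : ℝ) (hc : 1 ≤ c)
    (ha1 : ∀ n, 1 ≤ a n) (hb1 : ∀ n, 1 ≤ b n)
    (hab : ∀ n, a n ≤ c ^ ((n:ℝ)⁻¹) * b n)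
    (hba : ∀ n, b n ≤ c ^ ((n:ℝ)⁻¹) * a n) :
    limsup a atTop ≤ limsup b atTop := by
  have hc0 : (0:ℝ) < c := lt_of_lt_of_le one_pos hc
  have hrc : ∀ n : ℕ, c ^ ((n:ℝ)⁻¹) ≤ c := fun n => by
    have h1 : ((n:ℝ))⁻¹ ≤ 1 := by
      rcases Nat.eq_zero_or_pos n with rfl | hn
      · norm_num
      · rw [inv_le_one_iff₀]; right; exact_mod_cast hn
    calc c ^ ((n:ℝ)⁻¹) ≤ c ^ (1:ℝ) := Real.rpow_le_rpow_of_exponent_le hc h1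
      _ = c := Real.rpow_one c
  by_cases hbb : IsBoundedUnder (· ≤ ·) atTop b
  · -- bounded case
    have hcoa : IsCoboundedUnder (· ≤ ·) atTop a :=
      isCoboundedUnder_le_of_le atTop ha1
    have hB1 : (1:ℝ) ≤ limsup b atTop :=
      le_limsup_of_frequently_le (Eventually.frequently (Eventually.of_forall hb1)) hbb
    apply le_of_forall_gt_imp_ge_of_dense
    intro d' hd'
    set B := limsup b atTop with hBdef
    set d := (B + d') / 2 with hddef
    have hBd : B < d := by simp only [hddef]; linarith
    have hdd' : d < d' := by simp only [hddef]; linarith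
    have hd0 : (0:ℝ) < d := by linarith
    have hratio : (1:ℝ) < d' / d := (one_lt_div hd0).mpr hdd'
    have hev1 : ∀ᶠ n in atTop, b n < d := eventually_lt_of_limsup_lt hBd hbb
    have hev2 : ∀ᶠ n : ℕ in atTop, c ^ ((n:ℝ)⁻¹) < d' / d :=
      Tendsto.eventually_lt_const hratio (tendsto_rpow_inv_nat hc)
    have hev : ∀ᶠ n in atTop, a n ≤ d' := by
      filter_upwards [hev1, hev2] with n h1 h2
      have hb0 : (0:ℝ) ≤ b n := le_trans zero_le_one (hb1 n)
      calc a n ≤ c ^ ((n:ℝ)⁻¹) * b n := hab n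
        _ ≤ (d' / d) * b n := mul_le_mul_of_nonneg_right h2.le hb0
        _ ≤ (d' / d) * d := by
            apply mul_le_mul_of_nonneg_left h1.le
            positivity
        _ = d' := div_mul_cancel₀ _ (ne_of_gt hd0)
    exact limsup_le_of_le hcoa hev
  · -- unbounded case: both limsups are the junk value 0
    have haa : ¬ IsBoundedUnder (· ≤ ·) atTop a := by
      intro ⟨M, hM⟩
      apply hbb
      refine ⟨c * M, ?_⟩
      rw [eventually_map] at hM ⊢
      filter_upwards [hM] with n hn
      have h0 : (0:ℝ) ≤ c ^ ((n:ℝ)⁻¹) := Real.rpow_nonneg hc0.le _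
      calc b n ≤ c ^ ((n:ℝ)⁻¹) * a n := hba n
        _ ≤ c * a n := by
            apply mul_le_mul_of_nonneg_right (hrc n)
            linarith [ha1 n]
        _ ≤ c * M := mul_le_mul_of_nonneg_left hn hc0.le
    rw [limsup_of_not_bddUnder haa, limsup_of_not_bddUnder hbb]

/-- Key comparison lemma for liminf. -/
private lemma liminf_le_aux (a b : ℕ → ℝ) (c : ℝ) (hc : 1 ≤ c)
    (ha1 : ∀ n, 1 ≤ a n) (hb1 : ∀ n, 1 ≤ b n)
    (hab : ∀ n, a n ≤ c ^ ((n:ℝ)⁻¹) * b n)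
    (hba : ∀ n, b n ≤ c ^ ((n:ℝ)⁻¹) * a n) :
    liminf a atTop ≤ liminf b atTop := by
  have hc0 : (0:ℝ) < c := lt_of_lt_of_le one_pos hc
  have hrc : ∀ n : ℕ, c ^ ((n:ℝ)⁻¹) ≤ c := fun n => by
    have h1 : ((n:ℝ))⁻¹ ≤ 1 := by
      rcases Nat.eq_zero_or_pos n with rfl | hn
      · norm_num
      · rw [inv_le_one_iff₀]; right; exact_mod_cast hn
    calc c ^ ((n:ℝ)⁻¹) ≤ c ^ (1:ℝ) := Real.rpow_le_rpow_of_exponent_le hc h1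
      _ = c := Real.rpow_one c
  by_cases hta : Tendsto a atTop atTop
  · -- both tend to infinity, both liminfs are the junk value 0
    have htb : Tendsto b atTop atTop := by
      apply tendsto_atTop_mono' atTop (f₁ := fun n => a n / c)
      · refine Eventually.of_forall fun n => ?_
        rw [div_le_iff₀ hc0]
        calc a n ≤ c ^ ((n:ℝ)⁻¹) * b n := hab n
          _ ≤ c * b n := by
              apply mul_le_mul_of_nonneg_right (hrc n)
              linarith [hb1 n]
          _ = b n * c := mul_comm _ _
      · exact hta.atTop_div_const hc0
    rw [liminf_of_tendsto_atTop hta, liminf_of_tendsto_atTop htb]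
  · have htb : ¬ Tendsto b atTop atTop := by
      intro htb
      apply hta
      apply tendsto_atTop_mono' atTop (f₁ := fun n => b n / c)
      · refine Eventually.of_forall fun n => ?_
        rw [div_le_iff₀ hc0]
        calc b n ≤ c ^ ((n:ℝ)⁻¹) * a n := hba n
          _ ≤ c * a n := by
              apply mul_le_mul_of_nonneg_right (hrc n)
              linarith [ha1 n]
          _ = a n * c := mul_comm _ _
      · exact htb.atTop_div_const hc0
    have hcoa : IsCoboundedUnder (· ≥ ·) atTop a := cobounded_of_not_tendsto hta
    have hcob : IsCoboundedUnder (· ≥ ·) atTop b := cobounded_of_not_tendsto htb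
    have hB1 : (1:ℝ) ≤ liminf b atTop :=
      le_liminf_of_le hcob (Eventually.of_forall hb1)
    by_contra hlt
    push_neg at hlt
    obtain ⟨d, hdB, hdA⟩ := exists_between hlt
    have hd0 : (0:ℝ) < d := by linarith
    -- show d ≤ liminf b, contradiction
    have key : ∀ ε : ℝ, 0 < ε → d / (1 + ε) ≤ liminf b atTop := by
      intro ε hε
      have h1ε : (0:ℝ) < 1 + ε := by linarith
      have hbda : IsBoundedUnder (· ≥ ·) atTop a := isBoundedUnder_of ⟨1, fun n => ha1 n⟩
      have hev1 : ∀ᶠ n in atTop, d < a n := eventually_lt_of_lt_liminf hdA hbda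
      have hev2 : ∀ᶠ n : ℕ in atTop, c ^ ((n:ℝ)⁻¹) < 1 + ε :=
        Tendsto.eventually_lt_const (by linarith) (tendsto_rpow_inv_nat hc)
      have hev : ∀ᶠ n in atTop, d / (1 + ε) ≤ b n := by
        filter_upwards [hev1, hev2] with n h1 h2
        rw [div_le_iff₀ h1ε]
        have hb0 : (0:ℝ) ≤ b n := le_trans zero_le_one (hb1 n)
        calc d ≤ a n := h1.le
          _ ≤ c ^ ((n:ℝ)⁻¹) * b n := hab n
          _ ≤ (1 + ε) * b n := mul_le_mul_of_nonneg_right h2.le hb0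
          _ = b n * (1 + ε) := mul_comm _ _
      exact le_liminf_of_le hcob hev
    have hdle : d ≤ liminf b atTop := by
      have hBpos : (0:ℝ) < liminf b atTop := lt_of_lt_of_le one_pos hB1
      refine le_of_forall_pos_le_add fun δ hδ => ?_
      have hε : (0:ℝ) < δ / liminf b atTop := div_pos hδ hBpos
      have := key _ hε
      rw [div_le_iff₀ (by positivity)] at this
      calc d ≤ liminf b atTop * (1 + δ / liminf b atTop) := this
        _ = liminf b atTop + δ := by field_simp
    linarith

private lemma key_eq (a b : ℕ → ℝ) (c : ℝ) (hc : 1 ≤ c)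
    (ha1 : ∀ n, 1 ≤ a n) (hb1 : ∀ n, 1 ≤ b n)
    (hab : ∀ n, a n ≤ c ^ ((n:ℝ)⁻¹) * b n)
    (hba : ∀ n, b n ≤ c ^ ((n:ℝ)⁻¹) * a n) :
    limsup a atTop = limsup b atTop ∧ liminf a atTop = liminf b atTop :=
  ⟨le_antisymm (limsup_le_aux a b c hc ha1 hb1 hab hba)
      (limsup_le_aux b a c hc hb1 ha1 hba hab),
   le_antisymm (liminf_le_aux a b c hc ha1 hb1 hab hba)
      (liminf_le_aux b a c hc hb1 ha1 hba hab)⟩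

/-- the upper and lower arithmetic degrees do not depend on the choice of
height function within a commensurability class: if `h' ≤ m·h + C` and `h ≤ m'·h' + C'`
pointwise (with `m, m' ≥ 1`, `C, C' ≥ 0`) and `S_n(h,P) = Σ_w max 1 (h (f_w P))`, then
`limsup S_n(h',P)^{1/n} = limsup S_n(h,P)^{1/n}` and likewise for `liminf`. -/
theorem arithmetic_degree_independent_of_height {X : Type*} {k : ℕ} (hk : 1 ≤ k)
    (f : Fin k → X → X) (h h' : X → ℝ) (m m' C C' : ℝ)
    (hm : 1 ≤ m) (hm' : 1 ≤ m') (hC : 0 ≤ C) (hC' : 0 ≤ C')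
    (h₁ : ∀ Q : X, h' Q ≤ m * h Q + C) (h₂ : ∀ Q : X, h Q ≤ m' * h' Q + C')
    (P : X) :
    Filter.limsup (fun n : ℕ =>
        heightSum f (fun Q => max 1 (h' Q)) n P ^ ((n : ℝ)⁻¹)) atTop
      = Filter.limsup (fun n : ℕ =>
        heightSum f (fun Q => max 1 (h Q)) n P ^ ((n : ℝ)⁻¹)) atTop ∧
    Filter.liminf (fun n : ℕ =>
        heightSum f (fun Q => max 1 (h' Q)) n P ^ ((n : ℝ)⁻¹)) atTop
      = Filter.liminf (fun n : ℕ =>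
        heightSum f (fun Q => max 1 (h Q)) n P ^ ((n : ℝ)⁻¹)) atTop := by
  set c : ℝ := max (m + C) (m' + C') with hcdef
  have hc : (1:ℝ) ≤ c := le_trans (by linarith) (le_max_left _ _)
  have hc0 : (0:ℝ) < c := lt_of_lt_of_le one_pos hc
  -- pointwise comparisons
  have hpt1 : ∀ Q : X, max 1 (h' Q) ≤ c * max 1 (h Q) := by
    intro Q
    have hM : (1:ℝ) ≤ max 1 (h Q) := le_max_left _ _
    have hhQ : h Q ≤ max 1 (h Q) := le_max_right _ _
    have hmc : m + C ≤ c := le_max_left _ _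
    apply max_le
    · nlinarith
    · calc h' Q ≤ m * h Q + C := h₁ Q
        _ ≤ c * max 1 (h Q) := by nlinarith
  have hpt2 : ∀ Q : X, max 1 (h Q) ≤ c * max 1 (h' Q) := by
    intro Q
    have hM : (1:ℝ) ≤ max 1 (h' Q) := le_max_left _ _
    have hhQ : h' Q ≤ max 1 (h' Q) := le_max_right _ _
    have hmc : m' + C' ≤ c := le_max_right _ _
    apply max_le
    · nlinarith
    · calc h Q ≤ m' * h' Q + C' := h₂ Q
        _ ≤ c * max 1 (h' Q) := by nlinarith
  -- sums are at least 1
  have hsum_ge : ∀ (g : X → ℝ), (∀ Q, 1 ≤ max 1 (g Q)) →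
      ∀ n : ℕ, 1 ≤ heightSum f (fun Q => max 1 (g Q)) n P := by
    intro g _ n
    have hcard : 1 ≤ Fintype.card (Fin n → Fin k) := by
      rw [Fintype.card_fun]
      simp only [Fintype.card_fin]
      exact Nat.one_le_pow _ _ hk
    calc (1:ℝ) = (1:ℕ) • (1:ℝ) := by simp
      _ ≤ (Finset.univ : Finset (Fin n → Fin k)).card • (1:ℝ) := by
          rw [Finset.card_univ]
          exact nsmul_le_nsmul_left zero_le_one hcard
      _ ≤ ∑ w : Fin n → Fin k, max 1 (g (compWord f (List.ofFn w) P)) :=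
          Finset.card_nsmul_le_sum _ _ _ (fun w _ => le_max_left _ _)
      _ = heightSum f (fun Q => max 1 (g Q)) n P := rfl
  have hS1 : ∀ n, 1 ≤ heightSum f (fun Q => max 1 (h Q)) n P :=
    hsum_ge h (fun Q => le_max_left _ _)
  have hS1' : ∀ n, 1 ≤ heightSum f (fun Q => max 1 (h' Q)) n P :=
    hsum_ge h' (fun Q => le_max_left _ _)
  -- sum comparisons
  have hsum_le : ∀ (g g' : X → ℝ), (∀ Q, max 1 (g' Q) ≤ c * max 1 (g Q)) →
      ∀ n : ℕ, heightSum f (fun Q => max 1 (g' Q)) n P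
        ≤ c * heightSum f (fun Q => max 1 (g Q)) n P := by
    intro g g' hpt n
    unfold heightSum
    rw [Finset.mul_sum]
    exact Finset.sum_le_sum fun w _ => hpt _
  -- rpow comparisons
  have hrpow : ∀ (S S' : ℕ → ℝ), (∀ n, 1 ≤ S n) → (∀ n, 1 ≤ S' n) →
      (∀ n, S' n ≤ c * S n) →
      ∀ n : ℕ, S' n ^ ((n:ℝ)⁻¹) ≤ c ^ ((n:ℝ)⁻¹) * S n ^ ((n:ℝ)⁻¹) := by
    intro S S' hS hS' hle n
    have hinv : (0:ℝ) ≤ ((n:ℝ))⁻¹ := by positivity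
    calc S' n ^ ((n:ℝ)⁻¹) ≤ (c * S n) ^ ((n:ℝ)⁻¹) :=
          Real.rpow_le_rpow (le_trans zero_le_one (hS' n)) (hle n) hinv
      _ = c ^ ((n:ℝ)⁻¹) * S n ^ ((n:ℝ)⁻¹) :=
          Real.mul_rpow hc0.le (le_trans zero_le_one (hS n))
  have hone_rpow : ∀ (S : ℕ → ℝ), (∀ n, 1 ≤ S n) →
      ∀ n : ℕ, 1 ≤ S n ^ ((n:ℝ)⁻¹) := by
    intro S hS n
    exact Real.one_le_rpow (hS n) (by positivity)
  exact key_eq _ _ c hc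
    (hone_rpow _ hS1') (hone_rpow _ hS1)
    (hrpow _ _ hS1 hS1' (hsum_le h h' hpt1))
    (hrpow _ _ hS1' hS1 (hsum_le h' h hpt2))
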